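/- Let 1 ≤ k < n, let s_1, …, s_k ∈ ℝ, and let V = { y ∈ ℝ^n : Σ_{j=1}^n y_j^i = s_i for i = 1, …, k }. If x ∈ V is a point at which the coordinate function y ↦ y_n attains a local minimum or local maximum on V, then the values x_1, …, x_{n−1} take at most k − 1 distinct values; that is, the set {x_1, …, x_{n−1}} has cardinality at most k − 1. -/

import Mathlib

/-- Lagrange-multiplier structure of extrema of the last coordinate on the set
`V` of real `n`-tuples with prescribed first `k` power sums: if the coordinate
function `y ↦ y_n` attains a local minimum or maximum on `V` at `x`, then the
first `n − 1` coordinates `x_1, …, x_{n−1}` take at most `k − 1` distinct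
values. -/
theorem lagrange_power_sum_extremum (n k : ℕ) (hk : 1 ≤ k) (hkn : k < n)
    (s : ℕ → ℝ)
    (V : Set (Fin n → ℝ))
    (hV : V = {y : Fin n → ℝ | ∀ i : ℕ, 1 ≤ i → i ≤ k → ∑ j, (y j) ^ i = s i})
    (x : Fin n → ℝ) (hx : x ∈ V)
    (hext : IsLocalMinOn (fun y : Fin n → ℝ => y ⟨n - 1, by omega⟩) V x ∨
            IsLocalMaxOn (fun y : Fin n → ℝ => y ⟨n - 1, by omega⟩) V x) :
    ((Finset.univ.filter (fun j : Fin n => (j : ℕ) < n - 1)).image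
      (fun j => x j)).card ≤ k - 1 := by
  classical
  set last : Fin n := ⟨n - 1, by omega⟩ with hlastdef
  set f : Fin k → (Fin n → ℝ) → ℝ := fun i y => ∑ j, (y j) ^ ((i : ℕ) + 1) with hf
  set f' : Fin k → (Fin n → ℝ) →L[ℝ] ℝ :=
    fun i => ∑ j, ((((i : ℕ) + 1 : ℕ) : ℝ) * x j ^ (i : ℕ)) • ContinuousLinearMap.proj j with hf'
  have hVset : V = {y : Fin n → ℝ | ∀ i : Fin k, f i y = f i x} := by
    rw [hV]
    ext y
    simp only [Set.mem_setOf_eq, hf]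
    constructor
    · intro hy i
      have h1 : ∑ j, (y j) ^ ((i : ℕ) + 1) = s ((i : ℕ) + 1) :=
        hy _ (by omega) (by omega)
      have h2 : ∑ j, (x j) ^ ((i : ℕ) + 1) = s ((i : ℕ) + 1) := by
        rw [hV] at hx; exact hx _ (by omega) (by omega)
      rw [h1, h2]
    · intro hy i hi1 hik
      have h2 : ∑ j, (x j) ^ i = s i := by rw [hV] at hx; exact hx _ hi1 hik
      have := hy ⟨i - 1, by omega⟩
      simp only [Nat.sub_add_cancel hi1] at this
      rw [this, h2]
  have hder : ∀ i, HasStrictFDerivAt (f i) (f' i) x := by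
    intro i
    apply HasStrictFDerivAt.fun_sum
    intro j _
    exact (hasStrictDerivAt_pow ((i : ℕ) + 1) (x j)).comp_hasStrictFDerivAt x
      (hasStrictFDerivAt_apply (𝕜 := ℝ) j x)
  have hφ := hasStrictFDerivAt_apply (𝕜 := ℝ) last x
  have hextr : IsLocalExtrOn (fun y : Fin n → ℝ => y last) {y | ∀ i : Fin k, f i y = f i x} x := by
    rw [← hVset]; exact hext
  obtain ⟨Λ, Λ₀, hne, heq⟩ := hextr.exists_multipliers_of_hasStrictFDerivAt hder hφ
  have happ : ∀ v : Fin n → ℝ,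
      ∑ i : Fin k, Λ i * (∑ j, (((i : ℕ) + 1 : ℕ) : ℝ) * x j ^ (i : ℕ) * v j)
        + Λ₀ * v last = 0 := by
    intro v
    have := DFunLike.congr_fun heq v
    simpa [hf', ContinuousLinearMap.sum_apply, mul_assoc] using this
  -- evaluate at Pi.single j 1
  have hkey : ∀ j : Fin n,
      ∑ i : Fin k, Λ i * ((((i : ℕ) + 1 : ℕ) : ℝ) * x j ^ (i : ℕ))
        + Λ₀ * (if last = j then 1 else 0) = 0 := by
    intro j
    have := happ (Pi.single j 1)
    simpa [Pi.single_apply, Finset.mul_sum, mul_ite, Finset.sum_ite_eq'] using this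
  have hlastval : (last : ℕ) = n - 1 := rfl
  have hroot : ∀ j : Fin n, j ≠ last →
      ∑ i : Fin k, Λ i * ((((i : ℕ) + 1 : ℕ) : ℝ) * x j ^ (i : ℕ)) = 0 := by
    intro j hj
    have := hkey j
    simpa [Ne.symm hj] using this
  obtain ⟨i₀, hi₀⟩ : ∃ i, Λ i ≠ 0 := by
    by_contra h
    push_neg at h
    have hΛ0 : Λ = 0 := funext h
    have hl : Λ₀ = 0 := by
      have := hkey last
      simpa [hΛ0] using this
    exact hne (by simp [hΛ0, hl, Prod.ext_iff])
  set P : Polynomial ℝ :=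
    ∑ i : Fin k, Polynomial.C (Λ i * (((i : ℕ) + 1 : ℕ) : ℝ)) * Polynomial.X ^ (i : ℕ) with hP
  have hcoeff : P.coeff (i₀ : ℕ) = Λ i₀ * (((i₀ : ℕ) + 1 : ℕ) : ℝ) := by
    rw [hP, Polynomial.finset_sum_coeff]
    rw [Finset.sum_eq_single i₀]
    · rw [Polynomial.coeff_C_mul, Polynomial.coeff_X_pow, if_pos rfl, mul_one]
    · intro i _ hii
      have hne' : ¬ ((i₀ : ℕ) = (i : ℕ)) := fun h => hii (Fin.ext h.symm)
      rw [Polynomial.coeff_C_mul, Polynomial.coeff_X_pow, if_neg hne', mul_zero]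
    · intro h
      exact absurd (Finset.mem_univ i₀) h
  have hPne : P ≠ 0 := by
    intro h
    rw [h] at hcoeff
    simp only [Polynomial.coeff_zero] at hcoeff
    have : Λ i₀ * (((i₀ : ℕ) + 1 : ℕ) : ℝ) ≠ 0 := by
      apply mul_ne_zero hi₀
      positivity
    exact this hcoeff.symm
  have hdeg : P.natDegree ≤ k - 1 := by
    rw [hP]
    apply Polynomial.natDegree_sum_le_of_forall_le
    intro i _
    refine le_trans (Polynomial.natDegree_C_mul_X_pow_le _ _) ?_
    have := i.isLt
    omega
  have heval : ∀ j : Fin n, j ≠ last → P.IsRoot (x j) := by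
    intro j hj
    have h := hroot j hj
    rw [Polynomial.IsRoot, hP]
    rw [Polynomial.eval_finset_sum]
    rw [← h]
    apply Finset.sum_congr rfl
    intro i _
    simp [mul_assoc]
  have hsub : ((Finset.univ.filter (fun j : Fin n => (j : ℕ) < n - 1)).image
      (fun j => x j)) ⊆ P.roots.toFinset := by
    intro a ha
    rw [Finset.mem_image] at ha
    obtain ⟨j, hj, rfl⟩ := ha
    rw [Finset.mem_filter] at hj
    have hjne : j ≠ last := by
      intro h
      rw [h, hlastval] at hj
      omega
    rw [Multiset.mem_toFinset, Polynomial.mem_roots hPne]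
    exact heval j hjne
  calc ((Finset.univ.filter (fun j : Fin n => (j : ℕ) < n - 1)).image
      (fun j => x j)).card
      ≤ P.roots.toFinset.card := Finset.card_le_card hsub
    _ ≤ Multiset.card P.roots := Multiset.toFinset_card_le _
    _ ≤ P.natDegree := Polynomial.card_roots' P
    _ ≤ k - 1 := hdeg
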